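/- arXiv:1506.08714 — 3 statements merged into one kernel-verified Lean document; each statement's English description precedes it below -/
import Mathlib

section
/- Let Y be a topological space and let f : {−1,1}^ℕ → Y be a continuous map (where {−1,1}^ℕ carries the product topology of the discrete topology on {−1,1}). Suppose that for every finite word w ∈ {−1,1}^* the images of the two cylinders extending w intersect: f([w,−1]) ∩ f([w,+1]) ≠ ∅. Then the image of f is path connected. -/
private abbrev XX := ℕ → ({-1, 1} : Set ℤ)

/-- binary digit `j` (0-indexed, after the point) of `t`. -/
private noncomputable def bitR (j : ℕ) (t : ℝ) : Bool := decide (2 * ⌊2^j * t⌋ + 1 ≤ ⌊2^(j+1) * t⌋)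

private noncomputable def pre (n : ℕ) (t : ℝ) : List Bool := List.ofFn (fun j : Fin n => bitR j.1 t)

private def numL (s : List Bool) : ℕ := s.foldl (fun n d => 2*n + cond d 1 0) 0

private lemma numL_concat (s : List Bool) (d : Bool) :
    numL (s ++ [d]) = 2 * numL s + cond d 1 0 := by
  simp [numL, List.foldl_append]

private lemma numL_lt (s : List Bool) : numL s < 2 ^ s.length := by
  induction s using List.reverseRecOn with
  | nil => simp [numL]
  | append_singleton s d ih =>
      rw [numL_concat]
      simp only [List.length_append, List.length_singleton, pow_succ]
      cases d <;> simp <;> omega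

private lemma numL_inj : ∀ (s t : List Bool), s.length = t.length → numL s = numL t → s = t := by
  intro s
  induction s using List.reverseRecOn with
  | nil => intro t hl _; simpa using (List.length_eq_zero_iff.mp hl.symm).symm
  | append_singleton s d ih =>
      intro t hl hn
      rcases List.eq_nil_or_concat t with rfl | ⟨u, e, rfl⟩
      · simp at hl
      · simp only [List.concat_eq_append] at *
        rw [numL_concat, numL_concat] at hn
        have hde : d = e := by cases d <;> cases e <;> simp_all <;> omega
        subst hde
        have : numL s = numL u := by cases d <;> simp at hn <;> omega
        have hl' : s.length = u.length := by simpa using hl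
        rw [ih u hl' this]

private lemma numL_increment : ∀ (s t : List Bool), s.length = t.length →
    numL s + 1 = numL t →
    ∃ v k, s = v ++ false :: List.replicate k true ∧ t = v ++ true :: List.replicate k false := by
  intro s
  induction s using List.reverseRecOn with
  | nil => intro t hl hn
           rcases List.length_eq_zero_iff.mp hl.symm with rfl
           simp [numL] at hn
  | append_singleton s d ih =>
      intro t hl hn
      rcases List.eq_nil_or_concat t with rfl | ⟨u, e, rfl⟩
      · simp at hl
      · simp only [List.concat_eq_append] at *
        rw [numL_concat, numL_concat] at hn
        have hl' : s.length = u.length := by simpa using hl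
        cases d
        · -- s ends in false : e = true, numL s = numL u
          have he : e = true := by cases e <;> simp_all <;> omega
          subst he
          simp only [cond] at hn
          have : numL s = numL u := by omega
          have hsu : s = u := numL_inj s u hl' this
          exact ⟨s, 0, by simp, by simp [hsu]⟩
        · -- s ends in true : e = false, numL s + 1 = numL u
          have he : e = false := by cases e <;> simp_all <;> omega
          subst he
          simp only [cond] at hn
          have : numL s + 1 = numL u := by omega
          obtain ⟨v, k, hs, hu⟩ := ih u hl' this
          refine ⟨v, k + 1, ?_, ?_⟩
          · rw [hs, List.replicate_succ']; simp
          · rw [hu, List.replicate_succ']; simp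
private lemma floor_double (y : ℝ) : ⌊2*y⌋ = 2*⌊y⌋ ∨ ⌊2*y⌋ = 2*⌊y⌋ + 1 := by
  have h1 : 2*⌊y⌋ ≤ ⌊2*y⌋ := by
    rw [Int.le_floor]; push_cast; linarith [Int.floor_le y]
  have h2 : ⌊2*y⌋ < 2*⌊y⌋ + 2 := by
    rw [Int.floor_lt]; push_cast; linarith [Int.lt_floor_add_one y]
  omega

private lemma floor_pow_succ (j : ℕ) (t : ℝ) :
    ⌊2^(j+1) * t⌋ = 2*⌊2^j * t⌋ + cond (bitR j t) 1 0 := by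
  have he : (2:ℝ)^(j+1) * t = 2 * (2^j * t) := by ring
  have hd := floor_double ((2:ℝ)^j * t)
  rw [← he] at hd
  by_cases hb : bitR j t
  · simp only [hb, cond]
    have := of_decide_eq_true hb   -- 2⌊2^j t⌋+1 ≤ ⌊2^{j+1} t⌋
    rcases hd with hd | hd <;> omega
  · simp only [eq_false_of_ne_true hb, cond]
    have : ¬ (2 * ⌊2^j * t⌋ + 1 ≤ ⌊2^(j+1) * t⌋) := by
      intro hc; exact hb (decide_eq_true hc)
    rcases hd with hd | hd <;> omega

private lemma pre_succ (n : ℕ) (t : ℝ) : pre (n+1) t = pre n t ++ [bitR n t] := by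
  unfold pre
  rw [List.ofFn_succ']
  simp [Fin.last]

private lemma pre_add (n k : ℕ) (t : ℝ) :
    pre (n + k) t = pre n t ++ List.ofFn (fun j : Fin k => bitR (n + j.1) t) := by
  unfold pre
  rw [List.ofFn_add]
  rfl

private lemma num_pre (t : ℝ) (ht : t ∈ Set.Ico (0:ℝ) 1) :
    ∀ M, (numL (pre M t) : ℤ) = ⌊2^M * t⌋ := by
  intro M
  induction M with
  | zero =>
      simp [pre, numL]
      rw [Int.floor_eq_zero_iff.mpr (by simpa using ht)]
  | succ M ih =>
      rw [pre_succ, numL_concat, floor_pow_succ, ← ih]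
      push_cast
      cases bitR M t <;> simp <;> try ring
/-- iterate a splitting function along a list of binary digits. -/
private def EPP (sp : (XX × XX) → ((XX × XX) × (XX × XX))) (x y : XX) (s : List Bool) : XX × XX :=
  s.foldl (fun p d => cond d (sp p).2 (sp p).1) (x, y)

private lemma EPP_nil (sp) (x y : XX) : EPP sp x y [] = (x, y) := rfl

private lemma EPP_concat (sp) (x y : XX) (s : List Bool) (d : Bool) :
    EPP sp x y (s ++ [d]) = cond d (sp (EPP sp x y s)).2 (sp (EPP sp x y s)).1 := by
  simp [EPP, List.foldl_append]

section EPPlem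

variable {sp : (XX × XX) → ((XX × XX) × (XX × XX))} {x y : XX}
variable (h1 : ∀ p, (sp p).1.1 = p.1) (h2 : ∀ p, (sp p).2.2 = p.2)
variable (h3 : ∀ p n, (∀ i < n, p.1 i = p.2 i) →
    (∀ i < n+1, (sp p).1.1 i = (sp p).1.2 i) ∧ (∀ i < n+1, (sp p).2.1 i = (sp p).2.2 i))

include h1 h2 h3 in
private lemma EPP_agree : ∀ s : List Bool, ∀ i < s.length,
    (EPP sp x y s).1 i = (EPP sp x y s).2 i := by
  intro s
  induction s using List.reverseRecOn with
  | nil => simp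
  | append_singleton s d ih =>
      intro i hi
      rw [EPP_concat]
      have hlen : (s ++ [d]).length = s.length + 1 := by simp
      rw [hlen] at hi
      have := h3 (EPP sp x y s) s.length ih
      cases d
      · exact this.1 i hi
      · exact this.2 i hi

include h1 h2 h3 in
private lemma EPP_comp : ∀ (s : List Bool) (d : Bool), ∀ i < s.length,
    (EPP sp x y (s ++ [d])).1 i = (EPP sp x y s).1 i ∧
    (EPP sp x y (s ++ [d])).2 i = (EPP sp x y s).1 i := by
  intro s d i hi
  have hag := EPP_agree h1 h2 h3 (x := x) (y := y) s
  have h3' := h3 (EPP sp x y s) s.length hag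
  rw [EPP_concat]
  cases d
  · constructor
    · simp [h1]
    · calc (sp (EPP sp x y s)).1.2 i = (sp (EPP sp x y s)).1.1 i := (h3'.1 i (by omega)).symm
        _ = (EPP sp x y s).1 i := by rw [h1]
  · constructor
    · calc (sp (EPP sp x y s)).2.1 i = (sp (EPP sp x y s)).2.2 i := h3'.2 i (by omega)
        _ = (EPP sp x y s).2 i := by rw [h2]
        _ = (EPP sp x y s).1 i := (hag i hi).symm
    · calc (sp (EPP sp x y s)).2.2 i = (EPP sp x y s).2 i := by rw [h2]
        _ = (EPP sp x y s).1 i := (hag i hi).symm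

include h1 h2 h3 in
private lemma EPP_anc : ∀ (u s : List Bool), ∀ i < s.length,
    (EPP sp x y (s ++ u)).1 i = (EPP sp x y s).1 i := by
  intro u
  induction u using List.reverseRecOn with
  | nil => simp
  | append_singleton u d ih =>
      intro s i hi
      have : s ++ (u ++ [d]) = (s ++ u) ++ [d] := by simp
      rw [this]
      have hi' : i < (s ++ u).length := by simp; omega
      rw [(EPP_comp h1 h2 h3 (s ++ u) d i hi').1]
      exact ih s i hi

include h1 in
private lemma EPP_rep_false (s : List Bool) (k : ℕ) :
    (EPP sp x y (s ++ List.replicate k false)).1 = (EPP sp x y s).1 := by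
  induction k with
  | zero => simp
  | succ k ih =>
      rw [List.replicate_succ', ← List.append_assoc, EPP_concat]
      simpa [h1] using ih

include h2 in
private lemma EPP_rep_true (s : List Bool) (k : ℕ) :
    (EPP sp x y (s ++ List.replicate k true)).2 = (EPP sp x y s).2 := by
  induction k with
  | zero => simp
  | succ k ih =>
      rw [List.replicate_succ', ← List.append_assoc, EPP_concat]
      simpa [h2] using ih

end EPPlem
private lemma pm_cases (c : ({-1,1} : Set ℤ)) :
    c = ⟨-1, by norm_num⟩ ∨ c = ⟨1, by norm_num⟩ := by
  obtain ⟨v, hv⟩ := c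
  rcases hv with hv | hv <;> [left; right] <;> exact Subtype.ext (by simpa using hv)

open Classical in
/-- the splitting function built from choice functions `A`, `B`. -/
private noncomputable def mkSp (A B : List ({-1,1} : Set ℤ) → XX) (p : XX × XX) :
    (XX × XX) × (XX × XX) :=
  if hne : ∃ k, p.1 k ≠ p.2 k then
    if p.1 (Nat.find hne) = ⟨-1, by norm_num⟩ then
      ((p.1, A (List.ofFn (fun j : Fin (Nat.find hne) => p.1 j.1))),
       (B (List.ofFn (fun j : Fin (Nat.find hne) => p.1 j.1)), p.2))
    else
      ((p.1, B (List.ofFn (fun j : Fin (Nat.find hne) => p.1 j.1))),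
       (A (List.ofFn (fun j : Fin (Nat.find hne) => p.1 j.1)), p.2))
  else ((p.1, p.1), (p.1, p.1))

section mkSpLem

variable {Y : Type*} {f : XX → Y} {A B : List ({-1,1} : Set ℤ) → XX}
variable (hA1 : ∀ w (i : Fin w.length), A w i.1 = w.get i)
variable (hA2 : ∀ w, A w w.length = ⟨-1, by norm_num⟩)
variable (hB1 : ∀ w (i : Fin w.length), B w i.1 = w.get i)
variable (hB2 : ∀ w, B w w.length = ⟨1, by norm_num⟩)
variable (hAB : ∀ w, f (A w) = f (B w))

private lemma mkSp_fst (p : XX × XX) : (mkSp A B p).1.1 = p.1 := by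
  unfold mkSp
  split <;> [skip; rfl]
  split <;> rfl

private lemma mkSp_snd (p : XX × XX) : (mkSp A B p).2.2 = p.2 := by
  unfold mkSp
  split
  case isTrue hne => split <;> rfl
  case isFalse hne =>
    push_neg at hne
    exact funext fun i => hne i

include hAB in
private lemma mkSp_match (p : XX × XX) : f ((mkSp A B p).1.2) = f ((mkSp A B p).2.1) := by
  unfold mkSp
  split <;> [skip; rfl]
  split
  · exact hAB _
  · exact (hAB _).symm

include hA1 hA2 hB1 hB2 in
private lemma mkSp_h3 (p : XX × XX) (n : ℕ) (hag : ∀ i < n, p.1 i = p.2 i) :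
    (∀ i < n+1, (mkSp A B p).1.1 i = (mkSp A B p).1.2 i) ∧
    (∀ i < n+1, (mkSp A B p).2.1 i = (mkSp A B p).2.2 i) := by
  unfold mkSp
  split
  case isFalse => simp
  case isTrue hne =>
  set k := Nat.find hne with hk
  set w : List ({-1,1} : Set ℤ) := List.ofFn (fun j : Fin k => p.1 j.1) with hw
  have hwl : w.length = k := by simp [hw]
  have hnk : n ≤ k := by
    by_contra hc
    exact (Nat.find_spec hne) (hag k (by omega))
  have hkspec : p.1 k ≠ p.2 k := Nat.find_spec hne
  -- for i < k, both A w and B w agree with p.1 (and hence p.2) at i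
  have hAi : ∀ i < k, A w i = p.1 i := by
    intro i hi
    have := hA1 w ⟨i, by omega⟩
    rw [this]
    simp [hw, List.get_ofFn]
  have hBi : ∀ i < k, B w i = p.1 i := by
    intro i hi
    have := hB1 w ⟨i, by omega⟩
    rw [this]
    simp [hw, List.get_ofFn]
  have hAk : A w k = ⟨-1, by norm_num⟩ := by rw [← hwl]; exact hA2 w
  have hBk : B w k = ⟨1, by norm_num⟩ := by rw [← hwl]; exact hB2 w
  have hpk : ∀ i < k, p.1 i = p.2 i := by
    intro i hi
    by_contra hc
    exact Nat.find_min hne hi hc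
  split
  case isTrue hm1 =>
    -- p.1 k = -1, hence p.2 k = 1
    have hp2k : p.2 k = ⟨1, by norm_num⟩ := by
      rcases pm_cases (p.2 k) with hc | hc
      · exact absurd (hm1.trans hc.symm) hkspec
      · exact hc
    refine ⟨fun i hi => ?_, fun i hi => ?_⟩ <;> simp only
    · rcases lt_or_eq_of_le (show i ≤ k by omega) with hik | rfl
      · exact (hAi i hik).symm
      · rw [hAk, hm1]
    · rcases lt_or_eq_of_le (show i ≤ k by omega) with hik | rfl
      · rw [hBi i hik, hpk i hik]
      · rw [hBk, hp2k]
  case isFalse hm1 =>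
    -- p.1 k = 1, hence p.2 k = -1
    have hm1' : p.1 k = ⟨1, by norm_num⟩ := (pm_cases (p.1 k)).resolve_left hm1
    have hp2k : p.2 k = ⟨-1, by norm_num⟩ := by
      rcases pm_cases (p.2 k) with hc | hc
      · exact hc
      · exact absurd (hm1'.trans hc.symm) hkspec
    refine ⟨fun i hi => ?_, fun i hi => ?_⟩ <;> simp only
    · rcases lt_or_eq_of_le (show i ≤ k by omega) with hik | rfl
      · exact (hBi i hik).symm
      · rw [hBk, hm1']
    · rcases lt_or_eq_of_le (show i ≤ k by omega) with hik | rfl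
      · rw [hAi i hik, hpk i hik]
      · rw [hAk, hp2k]

end mkSpLem
private lemma cylinder_subset {Y : Type*} [TopologicalSpace Y] (f : XX → Y) (hf : Continuous f)
    (c : XX) (V : Set Y) (hV : IsOpen V) (hc : f c ∈ V) :
    ∃ m, ∀ d : XX, (∀ i < m, d i = c i) → f d ∈ V := by
  have hnb : f ⁻¹' V ∈ nhds c := hf.continuousAt.preimage_mem_nhds (hV.mem_nhds hc)
  rw [nhds_pi] at hnb
  have hdisc : ∀ i : ℕ, nhds (c i) = pure (c i) := fun i => by
    rw [nhds_discrete]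
  rw [show (Filter.pi fun i : ℕ => nhds (c i)) = Filter.pi fun i : ℕ => pure (c i) by
    congr 1; funext i; exact hdisc i] at hnb
  rw [Filter.mem_pi] at hnb
  obtain ⟨I, hIfin, t, ht, hsub⟩ := hnb
  obtain ⟨n, hn⟩ := hIfin.bddAbove
  refine ⟨n + 1, fun d hd => ?_⟩
  apply hsub
  intro i hi
  have : i ≤ n := hn hi
  rw [hd i (by omega)]
  exact (Filter.mem_pure).mp (ht i)
private lemma pre_length (n : ℕ) (t : ℝ) : (pre n t).length = n := by simp [pre]

private lemma bitR_true_iff (j : ℕ) (t : ℝ) :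
    bitR j t = true ↔ 2*⌊2^j * t⌋ + 1 ≤ ⌊2^(j+1) * t⌋ := by simp [bitR]

private lemma floor_right_dy (c t : ℝ) (M j : ℕ) (C : ℤ) (hC : (C:ℝ) = 2^j * c)
    (hj : j ≤ M) (h1 : c ≤ t) (h2 : t < c + ((2:ℝ)^M)⁻¹) : ⌊2^j * t⌋ = C := by
  have hpj : (0:ℝ) < 2^j := by positivity
  have hpM : (0:ℝ) < 2^M := by positivity
  have h2j : (2:ℝ)^j ≤ 2^M := pow_le_pow_right₀ (by norm_num) hj
  rw [Int.floor_eq_iff]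
  constructor
  · rw [hC]; nlinarith
  · push_cast
    rw [hC]
    have : 2^j * t < 2^j * (c + ((2:ℝ)^M)⁻¹) := by nlinarith
    have h3 : (2:ℝ)^j * ((2:ℝ)^M)⁻¹ ≤ 1 := by
      rw [← div_eq_mul_inv, div_le_one hpM]; exact h2j
    nlinarith

private lemma floor_left_dy (c t : ℝ) (M j : ℕ) (C : ℤ) (hC : (C:ℝ) = 2^j * c)
    (hj : j ≤ M) (h1 : c - ((2:ℝ)^M)⁻¹ ≤ t) (h2 : t < c) : ⌊2^j * t⌋ = C - 1 := by
  have hpj : (0:ℝ) < 2^j := by positivity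
  have hpM : (0:ℝ) < 2^M := by positivity
  have h2j : (2:ℝ)^j ≤ 2^M := pow_le_pow_right₀ (by norm_num) hj
  have h3 : (2:ℝ)^j * ((2:ℝ)^M)⁻¹ ≤ 1 := by
    rw [← div_eq_mul_inv, div_le_one hpM]; exact h2j
  rw [Int.floor_eq_iff]
  constructor
  · push_cast
    have : 2^j * (c - ((2:ℝ)^M)⁻¹) ≤ 2^j * t := by nlinarith
    rw [hC]; nlinarith
  · push_cast
    rw [hC]; nlinarith

private lemma pre_eq_of_floor (t t' : ℝ) (ht : t ∈ Set.Ico (0:ℝ) 1) (ht' : t' ∈ Set.Ico (0:ℝ) 1)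
    (M : ℕ) (hfl : ⌊2^M * t⌋ = ⌊2^M * t'⌋) : pre M t = pre M t' := by
  apply numL_inj _ _ (by rw [pre_length, pre_length])
  have h1 := num_pre t ht M
  have h2 := num_pre t' ht' M
  omega

private lemma pre_tail_const (t : ℝ) (M k : ℕ) (b : Bool)
    (hb : ∀ j, M ≤ j → j < M + k → bitR j t = b) :
    pre (M + k) t = pre M t ++ List.replicate k b := by
  rw [pre_add]
  congr 1
  rw [List.eq_replicate_iff]
  refine ⟨by simp, fun c hc => ?_⟩
  rw [List.mem_ofFn] at hc
  obtain ⟨i, rfl⟩ := hc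
  exact hb (M + i.1) (by omega) (by omega)

private lemma invPowLeOne9 (M : ℕ) : ((2:ℝ)^M)⁻¹ ≤ 1 := by
  have h1 : (1:ℝ) ≤ 2^M := one_le_pow₀ (by norm_num)
  have h0 : (0:ℝ) < 2^M := by positivity
  rw [inv_le_one₀ h0]; exact h1

private lemma invPowAnti9 (M N : ℕ) (h : M ≤ N) : ((2:ℝ)^N)⁻¹ ≤ ((2:ℝ)^M)⁻¹ :=
  inv_anti₀ (by positivity) (pow_le_pow_right₀ (by norm_num) h)
set_option maxHeartbeats 1000000 in
/-- If `f : {-1,1}^ℕ → Y` is continuous and for every finite word `w` over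
`{-1,1}` the images of the two cylinders `[w,-1]` and `[w,+1]` intersect, then the image
of `f` is path connected. -/
theorem stmt_4 (Y : Type*) [TopologicalSpace Y]
    (f : (ℕ → ({-1, 1} : Set ℤ)) → Y) (hf : Continuous f)
    (h : ∀ w : List ({-1, 1} : Set ℤ),
      (f '' {a | (∀ i : Fin w.length, a i = w.get i) ∧
          a w.length = ⟨-1, by norm_num⟩} ∩
       f '' {a | (∀ i : Fin w.length, a i = w.get i) ∧
          a w.length = ⟨1, by norm_num⟩}).Nonempty) :
    IsPathConnected (Set.range f) := by
  classical
  have h' : ∀ w : List ({-1,1} : Set ℤ), ∃ a b : XX,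
      f a = f b ∧ ((∀ i : Fin w.length, a i.1 = w.get i) ∧ a w.length = ⟨-1, by norm_num⟩) ∧
      ((∀ i : Fin w.length, b i.1 = w.get i) ∧ b w.length = ⟨1, by norm_num⟩) := by
    intro w
    obtain ⟨p, ⟨a, ha, hpa⟩, ⟨b, hb, hpb⟩⟩ := h w
    exact ⟨a, b, by rw [hpa, hpb], ⟨ha.1, ha.2⟩, ⟨hb.1, hb.2⟩⟩
  choose A B hAB hA hB using h'
  have hA1 : ∀ w (i : Fin w.length), A w i.1 = w.get i := fun w => (hA w).1
  have hA2 : ∀ w, A w w.length = ⟨-1, by norm_num⟩ := fun w => (hA w).2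
  have hB1 : ∀ w (i : Fin w.length), B w i.1 = w.get i := fun w => (hB w).1
  have hB2 : ∀ w, B w w.length = ⟨1, by norm_num⟩ := fun w => (hB w).2
  have h1 := mkSp_fst (A := A) (B := B)
  have h2 := mkSp_snd (A := A) (B := B)
  have h3 := mkSp_h3 hA1 hA2 hB1 hB2
  have hmt := mkSp_match (f := f) hAB
  suffices key : ∀ a b : (ℕ → ({-1,1} : Set ℤ)), JoinedIn (Set.range f) (f a) (f b) by
    exact ⟨f (fun _ => ⟨1, by norm_num⟩), Set.mem_range_self _,
      fun _ hy => by obtain ⟨c, rfl⟩ := hy; exact key _ c⟩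
  intro x y
  set sp := mkSp A B with hspdef
  set E : List Bool → XX × XX := EPP sp x y with hE
  have hanc : ∀ (u s : List Bool), ∀ i < s.length, (E (s ++ u)).1 i = (E s).1 i :=
    EPP_anc h1 h2 h3
  have hagr : ∀ s : List Bool, ∀ i < s.length, (E s).1 i = (E s).2 i :=
    EPP_agree h1 h2 h3
  have hrf : ∀ (s : List Bool) (k : ℕ), (E (s ++ List.replicate k false)).1 = (E s).1 :=
    EPP_rep_false h1
  have hrt : ∀ (s : List Bool) (k : ℕ), (E (s ++ List.replicate k true)).2 = (E s).2 :=
    EPP_rep_true h2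
  set z : ℝ → XX := fun t => fun i => (E (pre (i+1) t)).1 i with hzdef
  have hz1 : ∀ (t : ℝ) (M i : ℕ), i < M → z t i = (E (pre M t)).1 i := by
    intro t M i hi
    have hpe : pre M t = pre (i+1) t ++ List.ofFn (fun j : Fin (M - (i+1)) => bitR ((i+1) + j.1) t) := by
      rw [← pre_add]; congr 1; omega
    rw [hpe, hanc _ _ i (by rw [pre_length]; omega)]
  set G : ℝ → Y := fun t => if t < 1 then f (z t) else f y with hGdef
  have hGrange : ∀ t, G t ∈ Set.range f := by
    intro t
    simp only [hGdef]
    split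
    · exact Set.mem_range_self _
    · exact Set.mem_range_self _
  have hG0 : G 0 = f x := by
    have hb0 : ∀ j : ℕ, bitR j (0:ℝ) = false := by
      intro j
      have : (2:ℝ)^j * 0 = 0 := by ring
      simp [bitR]
    have hz0 : z 0 = x := by
      funext i
      have hpre : pre (i+1) (0:ℝ) = [] ++ List.replicate (i+1) false := by
        have := pre_tail_const 0 0 (i+1) false (fun j _ _ => hb0 j)
        simpa [pre] using this
      show (E (pre (i+1) (0:ℝ))).1 i = x i
      rw [hpre, hrf]
      rfl
    simp [hGdef, hz0]
  have hG1 : G 1 = f y := by simp [hGdef]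
  have hcont : ContinuousOn G (Set.Icc (0:ℝ) 1) := by
    intro t₀ ht₀
    rw [ContinuousWithinAt, tendsto_nhds]
    intro V hV hGV
    rw [Metric.mem_nhdsWithin_iff]
    rcases eq_or_lt_of_le ht₀.2 with heq1 | hlt1
    · -- t₀ = 1
      subst heq1
      obtain ⟨m, hm⟩ := cylinder_subset f hf y V hV (by rwa [hG1] at hGV)
      refine ⟨((2:ℝ)^m)⁻¹, by positivity, ?_⟩
      rintro t ⟨htb, htI⟩
      rw [Metric.mem_ball, Real.dist_eq] at htb
      rcases eq_or_lt_of_le htI.2 with rfl | htlt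
      · simp only [Set.mem_preimage]; exact hGV
      · have habs := abs_lt.mp htb
        have hlow : 1 - ((2:ℝ)^m)⁻¹ ≤ t := by linarith [habs.1]
        have hfl : ∀ j ≤ m, ⌊2^j * t⌋ = 2^j - 1 := by
          intro j hj
          have := floor_left_dy 1 t m j (2^j) (by push_cast; ring) hj (by linarith) htlt
          simpa using this
        have hbt : ∀ j, j < m → bitR j t = true := by
          intro j hj
          rw [bitR_true_iff, hfl j (le_of_lt hj), hfl (j+1) (by omega)]
          have h2jj : (2:ℤ)^(j+1) = 2 * 2^j := by ring
          omega
        have hprec : pre m t = [] ++ List.replicate m true := by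
          have := pre_tail_const t 0 m true (fun j _ hj2 => hbt j (by omega))
          simpa [pre] using this
        have hzy : ∀ i < m, z t i = y i := by
          intro i hi
          rw [hz1 t m i hi, hagr _ i (by rw [pre_length]; omega), hprec]
          have e1 : ([] : List Bool) ++ List.replicate m true = List.replicate m true := by simp
          rw [hrt]
          rfl
        simp only [Set.mem_preimage]
        have hGt : G t = f (z t) := if_pos htlt
        rw [hGt]; exact hm _ hzy
    · -- t₀ < 1
      have ht0Ico : t₀ ∈ Set.Ico (0:ℝ) 1 := ⟨ht₀.1, hlt1⟩
      have hGt0 : G t₀ = f (z t₀) := if_pos hlt1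
      obtain ⟨m, hm⟩ := cylinder_subset f hf (z t₀) V hV (by rwa [hGt0] at hGV)
      by_cases hdy : ∃ (r : ℕ) (C : ℤ), (C:ℝ) = 2^r * t₀
      · -- dyadic
        obtain ⟨r, C, hCr⟩ := hdy
        set M₀ := max m r with hM₀
        have hrM₀ : r ≤ M₀ := le_max_right _ _
        have hmM₀ : m ≤ M₀ := le_max_left _ _
        have hdyj : ∀ j, M₀ ≤ j → ∃ D : ℤ, (D:ℝ) = 2^j * t₀ := by
          intro j hj
          refine ⟨2^(j-r) * C, ?_⟩
          push_cast
          rw [hCr, ← mul_assoc, ← pow_add]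
          congr 2
          omega
        obtain ⟨C₀, hC₀⟩ := hdyj M₀ le_rfl
        have hbits0 : ∀ j, M₀ ≤ j → bitR j t₀ = false := by
          intro j hj
          obtain ⟨D, hD⟩ := hdyj j hj
          have hD2 : ((2*D : ℤ):ℝ) = 2^(j+1) * t₀ := by push_cast; rw [hD]; ring
          have f1 : ⌊2^j * t₀⌋ = D := by rw [← hD, Int.floor_intCast]
          have f2 : ⌊2^(j+1) * t₀⌋ = 2*D := by rw [← hD2, Int.floor_intCast]
          rw [Bool.eq_false_iff]
          intro hbb
          have := (bitR_true_iff j t₀).mp hbb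
          rw [f1, f2] at this; omega
        have hzt0 : z t₀ = (E (pre M₀ t₀)).1 := by
          funext i
          rcases lt_or_ge i M₀ with hi | hi
          · exact hz1 t₀ M₀ i hi
          · have hpe : pre (i+1) t₀ = pre M₀ t₀ ++ List.replicate (i+1-M₀) false := by
              have := pre_tail_const t₀ M₀ (i+1-M₀) false (fun j hj1 _ => hbits0 j hj1)
              rw [← this]; congr 1; omega
            show (E (pre (i+1) t₀)).1 i = _
            rw [hpe, hrf]
        by_cases ht00 : t₀ = 0
        · -- t₀ = 0 : only right side matters
          subst ht00
          refine ⟨((2:ℝ)^M₀)⁻¹, by positivity, ?_⟩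
          rintro t ⟨htb, htI⟩
          rw [Metric.mem_ball, Real.dist_eq] at htb
          have habs := abs_lt.mp htb
          have htup : t < ((2:ℝ)^M₀)⁻¹ := by linarith [habs.2]
          have ht1 : t < 1 := by
            rcases lt_or_ge t 1 with hc | hc
            · exact hc
            · exfalso; linarith [invPowLeOne9 M₀]
          have hfl : ⌊2^M₀ * t⌋ = 0 := by
            have := floor_right_dy 0 t M₀ M₀ 0 (by simp) le_rfl htI.1 (by simpa using htup)
            simpa using this
          have hpre : pre M₀ t = pre M₀ 0 := by
            apply pre_eq_of_floor t 0 ⟨htI.1, ht1⟩ (by norm_num) M₀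
            rw [hfl]; simp
          have hzz : ∀ i < m, z t i = z 0 i := by
            intro i hi
            rw [hz1 t M₀ i (lt_of_lt_of_le hi hmM₀), hpre, ← hz1 0 M₀ i (lt_of_lt_of_le hi hmM₀)]
          simp only [Set.mem_preimage]
          have hGt : G t = f (z t) := if_pos ht1
          rw [hGt]; exact hm _ hzz
        · -- t₀ > 0
          have ht0pos : 0 < t₀ := lt_of_le_of_ne ht₀.1 (Ne.symm ht00)
          have hptM0 : (0:ℝ) < 2^M₀ := by positivity
          have hC₀pos : 1 ≤ C₀ := by
            have h0 : (0:ℝ) < C₀ := by rw [hC₀]; positivity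
            have : (0:ℤ) < C₀ := by exact_mod_cast h0
            omega
          set t₁ : ℝ := t₀ - ((2:ℝ)^(M₀+1))⁻¹ with ht₁def
          have ht₀ge : ((2:ℝ)^M₀)⁻¹ ≤ t₀ := by
            have h1 : (1:ℝ) ≤ 2^M₀ * t₀ := by
              rw [← hC₀]; exact_mod_cast hC₀pos
            rw [← one_div, div_le_iff₀ hptM0]
            nlinarith
          have ht₁Ico : t₁ ∈ Set.Ico (0:ℝ) 1 := by
            constructor
            · have := invPowAnti9 M₀ (M₀+1) (by omega)
              rw [ht₁def]; linarith
            · have : (0:ℝ) < ((2:ℝ)^(M₀+1))⁻¹ := by positivity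
              rw [ht₁def]; linarith
          have hflt₁ : ⌊2^M₀ * t₁⌋ = C₀ - 1 := by
            apply floor_left_dy t₀ t₁ (M₀+1) M₀ C₀ hC₀ (by omega)
            · rw [ht₁def]
            · have hx : (0:ℝ) < ((2:ℝ)^(M₀+1))⁻¹ := by positivity
              rw [ht₁def]; linarith
          have hnum' : (numL (pre M₀ t₀) : ℤ) = C₀ := by
            rw [num_pre t₀ ht0Ico, ← hC₀, Int.floor_intCast]
          have hnumL : (numL (pre M₀ t₁) : ℤ) = C₀ - 1 := by
            rw [num_pre t₁ ht₁Ico, hflt₁]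
          have hincr : numL (pre M₀ t₁) + 1 = numL (pre M₀ t₀) := by omega
          obtain ⟨v, k, hsv, hs'v⟩ :=
            numL_increment (pre M₀ t₁) (pre M₀ t₀) (by rw [pre_length, pre_length]) hincr
          have hb : z t₀ = (E (v ++ [true])).1 := by
            rw [hzt0, hs'v]
            have e : v ++ true :: List.replicate k false
                = (v ++ [true]) ++ List.replicate k false := by simp
            rw [e, hrf]
          have ha' : (E (pre M₀ t₁)).2 = (E (v ++ [false])).2 := by
            rw [hsv]
            have e : v ++ false :: List.replicate k true
                = (v ++ [false]) ++ List.replicate k true := by simp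
            rw [e, hrt]
          set a : XX := (E (v ++ [false])).2 with hadef
          have hfab : f a = f (z t₀) := by
            rw [hb, hadef]
            have e1 : E (v ++ [false]) = (sp (E v)).1 := by rw [hE]; exact EPP_concat _ _ _ _ _
            have e2 : E (v ++ [true]) = (sp (E v)).2 := by rw [hE]; exact EPP_concat _ _ _ _ _
            rw [e1, e2]
            exact hmt (E v)
          obtain ⟨m₂, hm₂⟩ := cylinder_subset f hf a V hV (by rw [hfab, ← hGt0]; exact hGV)
          set M := max M₀ m₂ with hMdef
          have hM₀M : M₀ ≤ M := le_max_left _ _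
          have hm₂M : m₂ ≤ M := le_max_right _ _
          refine ⟨((2:ℝ)^M)⁻¹, by positivity, ?_⟩
          rintro t ⟨htb, htI⟩
          rw [Metric.mem_ball, Real.dist_eq] at htb
          have habs := abs_lt.mp htb
          rcases lt_or_ge t t₀ with htlt | htge
          · -- left side
            have hge : t₀ - ((2:ℝ)^M)⁻¹ ≤ t := by linarith [habs.1]
            have ht1 : t < 1 := lt_trans htlt hlt1
            have htIco : t ∈ Set.Ico (0:ℝ) 1 := ⟨htI.1, ht1⟩
            have hflM₀ : ⌊2^M₀ * t⌋ = C₀ - 1 := floor_left_dy t₀ t M M₀ C₀ hC₀ hM₀M hge htlt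
            have hpreM₀ : pre M₀ t = pre M₀ t₁ := by
              apply pre_eq_of_floor t t₁ htIco ht₁Ico
              rw [hflM₀, hflt₁]
            have hbt : ∀ j, M₀ ≤ j → j < M → bitR j t = true := by
              intro j hj1 _
              obtain ⟨D, hD⟩ := hdyj j hj1
              have hD2 : ((2*D : ℤ):ℝ) = 2^(j+1) * t₀ := by push_cast; rw [hD]; ring
              have f1 : ⌊2^j * t⌋ = D - 1 := floor_left_dy t₀ t M j D hD (by omega) hge htlt
              have f2 : ⌊2^(j+1) * t⌋ = 2*D - 1 :=
                floor_left_dy t₀ t M (j+1) (2*D) hD2 (by omega) hge htlt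
              rw [bitR_true_iff, f1, f2]; omega
            have hpreM : pre M t = pre M₀ t₁ ++ List.replicate (M - M₀) true := by
              have := pre_tail_const t M₀ (M - M₀) true (fun j hj1 hj2 => hbt j hj1 (by omega))
              rw [← hpreM₀, ← this]; congr 1; omega
            have hzz : ∀ i < m₂, z t i = a i := by
              intro i hi
              rw [hz1 t M i (lt_of_lt_of_le hi hm₂M),
                hagr _ i (by rw [pre_length]; exact lt_of_lt_of_le hi hm₂M), hpreM, hsv]
              have e : (v ++ false :: List.replicate k true) ++ List.replicate (M - M₀) true
                  = (v ++ [false]) ++ List.replicate (k + (M - M₀)) true := by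
                rw [List.replicate_add]; simp
              rw [e, hrt]
            simp only [Set.mem_preimage]
            have hGt : G t = f (z t) := if_pos ht1
            rw [hGt]; exact hm₂ _ hzz
          · -- right side
            have hup : t < t₀ + ((2:ℝ)^M)⁻¹ := by linarith [habs.2]
            obtain ⟨D, hD⟩ := hdyj M hM₀M
            have hflM : ⌊2^M * t⌋ = D := floor_right_dy t₀ t M M D hD le_rfl htge hup
            have ht1 : t < 1 := by
              have hpMM : (0:ℝ) < 2^M := by positivity
              have hDlt : D < 2^M := by
                have hr : (D:ℝ) < 2^M := by
                  rw [hD]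
                  calc 2^M * t₀ < 2^M * 1 := by nlinarith
                    _ = 2^M := by ring
                exact_mod_cast hr
              by_contra hc
              push_neg at hc
              have h2 : ((2^M : ℤ) : ℝ) ≤ 2^M * t := by push_cast; nlinarith
              have h3 := Int.le_floor.mpr h2
              rw [hflM] at h3
              omega
            have htIco : t ∈ Set.Ico (0:ℝ) 1 := ⟨htI.1, ht1⟩
            have hflM₀t : ⌊2^M₀ * t⌋ = C₀ := floor_right_dy t₀ t M M₀ C₀ hC₀ hM₀M htge hup
            have hflM₀t₀ : ⌊2^M₀ * t₀⌋ = C₀ := by rw [← hC₀, Int.floor_intCast]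
            have hbf : ∀ j, M₀ ≤ j → j < M → bitR j t = false := by
              intro j hj1 _
              obtain ⟨D', hD'⟩ := hdyj j hj1
              have hD2 : ((2*D' : ℤ):ℝ) = 2^(j+1) * t₀ := by push_cast; rw [hD']; ring
              have f1 : ⌊2^j * t⌋ = D' := floor_right_dy t₀ t M j D' hD' (by omega) htge hup
              have f2 : ⌊2^(j+1) * t⌋ = 2*D' :=
                floor_right_dy t₀ t M (j+1) (2*D') hD2 (by omega) htge hup
              rw [Bool.eq_false_iff]
              intro hbb
              have := (bitR_true_iff j t).mp hbb
              rw [f1, f2] at this; omega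
            have hpreM₀eq : pre M₀ t = pre M₀ t₀ :=
              pre_eq_of_floor t t₀ htIco ht0Ico M₀ (by rw [hflM₀t, hflM₀t₀])
            have hpreM : pre M t = pre M₀ t₀ ++ List.replicate (M - M₀) false := by
              have := pre_tail_const t M₀ (M - M₀) false (fun j hj1 hj2 => hbf j hj1 (by omega))
              rw [← hpreM₀eq, ← this]; congr 1; omega
            have hzz : ∀ i < m, z t i = z t₀ i := by
              intro i hi
              have him : i < M := lt_of_lt_of_le (lt_of_lt_of_le hi hmM₀) hM₀M
              rw [hz1 t M i him, hpreM, hrf, hzt0]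
            simp only [Set.mem_preimage]
            have hGt : G t = f (z t) := if_pos ht1
            rw [hGt]; exact hm _ hzz
      · -- non-dyadic
        push_neg at hdy
        set J := ⌊2^m * t₀⌋ with hJ
        have hpM : (0:ℝ) < 2^m := by positivity
        have hJlt : (J:ℝ) < 2^m * t₀ := lt_of_le_of_ne (Int.floor_le _) (hdy m J)
        have hJgt : 2^m * t₀ < J + 1 := Int.lt_floor_add_one _
        set δ := min ((2^m * t₀ - J) / 2^m) ((J + 1 - 2^m * t₀) / 2^m) with hδ
        have hδpos : 0 < δ := by
          apply lt_min
          · apply div_pos _ hpM; linarith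
          · apply div_pos _ hpM; linarith
        refine ⟨δ, hδpos, ?_⟩
        rintro t ⟨htb, htI⟩
        rw [Metric.mem_ball, Real.dist_eq] at htb
        have habs := abs_lt.mp htb
        have hmin1 : δ ≤ (2^m * t₀ - J) / 2^m := by rw [hδ]; exact min_le_left _ _
        have hmin2 : δ ≤ (J + 1 - 2^m * t₀) / 2^m := by rw [hδ]; exact min_le_right _ _
        have hd1 : δ * 2^m ≤ 2^m * t₀ - J := (le_div_iff₀ hpM).mp hmin1
        have hd2 : δ * 2^m ≤ J + 1 - 2^m * t₀ := (le_div_iff₀ hpM).mp hmin2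
        have hfl : ⌊2^m * t⌋ = J := by
          rw [Int.floor_eq_iff]
          constructor
          · nlinarith [habs.1]
          · push_cast; nlinarith [habs.2]
        have hJle : (J:ℝ) + 1 ≤ 2^m := by
          have hJZ : J < 2^m := by
            have : (J:ℝ) < 2^m := by
              calc (J:ℝ) < 2^m * t₀ := hJlt
                _ < 2^m * 1 := by nlinarith
                _ = 2^m := by ring
            exact_mod_cast this
          have : (J:ℤ) + 1 ≤ 2^m := by omega
          exact_mod_cast this
        have ht1 : t < 1 := by
          have h2 : 2^m * t < (J:ℝ) + 1 := by nlinarith [habs.2]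
          nlinarith
        have hpre : pre m t = pre m t₀ :=
          pre_eq_of_floor t t₀ ⟨htI.1, ht1⟩ ht0Ico m (by rw [hfl])
        have hzz : ∀ i < m, z t i = z t₀ i := by
          intro i hi
          rw [hz1 t m i hi, hpre, ← hz1 t₀ m i hi]
        simp only [Set.mem_preimage]
        have hGt : G t = f (z t) := if_pos ht1
        rw [hGt]; exact hm _ hzz
  -- assemble the path
  have hcG : Continuous ((Set.Icc (0:ℝ) 1).restrict G) :=
    continuousOn_iff_continuous_restrict.mp hcont
  refine ⟨⟨⟨fun t => G t.1, hcG⟩, ?_, ?_⟩, fun t => hGrange _⟩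
  · simpa using hG0
  · simpa using hG1
end

section
/- Let M be a d×d real matrix (d ≥ 1) all of whose complex eigenvalues have modulus strictly less than 1, and let u ∈ ℝ^d. If |det M| < 1/2, then the attractor A_M = {∑_{k=0}^∞ a_k M^k u : (a_k) ∈ {−1,1}^ℕ} has d-dimensional Lebesgue measure zero; in particular, A_M has empty interior. -/
open Matrix MeasureTheory Filter
open scoped ENNReal NNReal Topology

attribute [local instance] Matrix.linftyOpNormedAddCommGroup Matrix.linftyOpNormedRing
  Matrix.linftyOpNormedAlgebra Matrix.linftyOpNormedSpace Matrix.linftyOpIsBoundedSMul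

lemma stmt8_summable (d : ℕ) (hd : 1 ≤ d) (M : Matrix (Fin d) (Fin d) ℝ)
    (hspec : ∀ κ ∈ spectrum ℂ (M.map (algebraMap ℝ ℂ)), ‖κ‖ < 1)
    (u : Fin d → ℝ) :
    Summable (fun k : ℕ => ‖(M ^ k).mulVec u‖) := by
  haveI : Nonempty (Fin d) := ⟨⟨0, hd⟩⟩
  set Mc := M.map (algebraMap ℝ ℂ) with hMc
  have hρ : spectralRadius ℂ Mc < 1 := by
    have h := spectrum.spectralRadius_lt_of_forall_lt Mc (r := 1)
      (fun z hz => by simpa [← coe_nnnorm] using hspec z hz)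
    simpa using h
  obtain ⟨r, hr1, hr2⟩ := ENNReal.lt_iff_exists_nnreal_btwn.mp hρ
  have hr2' : (r : ℝ) < 1 := by exact_mod_cast hr2
  have hgel := spectrum.pow_nnnorm_pow_one_div_tendsto_nhds_spectralRadius Mc
  have hev : ∀ᶠ n : ℕ in atTop, (‖Mc ^ n‖₊ : ℝ≥0∞) ^ (1 / (n : ℝ)) < (r : ℝ≥0∞) :=
    hgel.eventually_lt_const hr1
  -- convert to ‖M ^ n‖ ≤ r ^ n eventually
  have hnorm_eq : ∀ n : ℕ, ‖Mc ^ n‖₊ = ‖M ^ n‖₊ := by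
    intro n
    have : Mc ^ n = (M ^ n).map (algebraMap ℝ ℂ) := by
      simp only [hMc, ← RingHom.mapMatrix_apply, ← map_pow]
    rw [this]
    simp [Matrix.linfty_opNNNorm_def, Matrix.map_apply, Complex.nnnorm_real]
  have hev2 : ∀ᶠ n : ℕ in atTop, ‖(M ^ n).mulVec u‖ ≤ ‖u‖ * (r : ℝ) ^ n := by
    filter_upwards [hev, eventually_ge_atTop 1] with n hn hn1
    have hne : (n : ℝ) ≠ 0 := by positivity
    have h1 : (‖Mc ^ n‖₊ : ℝ≥0∞) < (r : ℝ≥0∞) ^ (n : ℝ) := by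
      have := ENNReal.rpow_lt_rpow hn (by positivity : (0:ℝ) < n)
      rwa [← ENNReal.rpow_mul, one_div, inv_mul_cancel₀ hne, ENNReal.rpow_one] at this
    have h1' : (‖Mc ^ n‖₊ : ℝ≥0∞) < ((r ^ n : ℝ≥0) : ℝ≥0∞) := by
      rwa [ENNReal.coe_pow, ← ENNReal.rpow_natCast]
    have h2 : ‖M ^ n‖₊ ≤ r ^ n := by
      rw [← hnorm_eq n]; exact_mod_cast h1'.le
    calc ‖(M ^ n).mulVec u‖ ≤ ‖M ^ n‖ * ‖u‖ := Matrix.linfty_opNorm_mulVec _ _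
      _ ≤ (r : ℝ) ^ n * ‖u‖ := by
          apply mul_le_mul_of_nonneg_right _ (norm_nonneg u)
          exact_mod_cast h2
      _ = ‖u‖ * (r : ℝ) ^ n := mul_comm _ _
  apply Summable.of_norm_bounded_eventually_nat (g := fun n => ‖u‖ * (r : ℝ) ^ n)
    ((summable_geometric_of_lt_one r.2 hr2').mul_left _)
  simpa using hev2

/-- If all complex eigenvalues of `M` have modulus `< 1` and
`|det M| < 1/2`, then the attractor `A_M` is Lebesgue-null; in particular it has
empty interior. -/
theorem stmt_8 (d : ℕ) (hd : 1 ≤ d) (M : Matrix (Fin d) (Fin d) ℝ)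
    (hspec : ∀ κ ∈ spectrum ℂ (M.map (algebraMap ℝ ℂ)), ‖κ‖ < 1)
    (u : Fin d → ℝ)
    (hdet : |M.det| < 1 / 2) :
    volume {x : Fin d → ℝ | ∃ a : ℕ → ℝ, (∀ k, a k = -1 ∨ a k = 1) ∧
        x = ∑' k : ℕ, a k • (M ^ k).mulVec u} = 0 ∧
    interior {x : Fin d → ℝ | ∃ a : ℕ → ℝ, (∀ k, a k = -1 ∨ a k = 1) ∧
        x = ∑' k : ℕ, a k • (M ^ k).mulVec u} = ∅ := by
  classical
  set v : ℕ → (Fin d → ℝ) := fun k => (M ^ k).mulVec u with hv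
  have hsum : Summable (fun k : ℕ => ‖v k‖) := stmt8_summable d hd M hspec u
  set S : Set (ℕ → ℝ) := Set.pi Set.univ (fun _ : ℕ => ({-1, 1} : Set ℝ)) with hS
  set π : (ℕ → ℝ) → (Fin d → ℝ) := fun a => ∑' k : ℕ, a k • v k with hπ
  set A : Set (Fin d → ℝ) := {x : Fin d → ℝ | ∃ a : ℕ → ℝ, (∀ k, a k = -1 ∨ a k = 1) ∧
        x = ∑' k : ℕ, a k • (M ^ k).mulVec u} with hA
  -- membership in S
  have hmemS : ∀ a : ℕ → ℝ, a ∈ S ↔ ∀ k, a k = -1 ∨ a k = 1 := by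
    intro a
    simp [hS, Set.mem_pi]
  have hAeq : A = π '' S := by
    ext x
    simp only [hA, Set.mem_setOf_eq, Set.mem_image]
    constructor
    · rintro ⟨a, ha, rfl⟩; exact ⟨a, (hmemS a).2 ha, rfl⟩
    · rintro ⟨a, ha, rfl⟩; exact ⟨a, (hmemS a).1 ha, rfl⟩
  -- S is compact
  have hScomp : IsCompact S := isCompact_univ_pi fun _ => (Set.toFinite _).isCompact
  -- bound on S
  have hbdd : ∀ (n : ℕ) (a : ℕ → ℝ), a ∈ S → ‖a n • v n‖ ≤ ‖v n‖ := by
    intro n a haS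
    have h1 : |a n| = 1 := by
      rcases (hmemS a).1 haS n with h | h <;> rw [h] <;> norm_num
    rw [norm_smul, Real.norm_eq_abs, h1, one_mul]
  -- π is continuous on S
  have hcont : ContinuousOn π S := by
    apply (tendstoUniformlyOn_tsum hsum hbdd).continuousOn
    refine Filter.Frequently.of_forall fun t => ?_
    exact (continuous_finset_sum t fun k _ =>
      ((continuous_apply k).smul continuous_const)).continuousOn
  have hAcomp : IsCompact A := hAeq ▸ hScomp.image_of_continuousOn hcont
  -- summability of summands for a ∈ S
  have hsummand : ∀ a : ℕ → ℝ, a ∈ S → Summable (fun k : ℕ => a k • v k) := by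
    intro a ha
    exact Summable.of_norm_bounded hsum (fun n => hbdd n a ha)
  -- the continuous linear map
  set L : (Fin d → ℝ) →L[ℝ] (Fin d → ℝ) := LinearMap.toContinuousLinearMap (M.mulVecLin) with hL
  have hLapp : ∀ y, L y = M.mulVec y := fun y => rfl
  -- the self-affinity inclusion
  have hsub : A ⊆ ((fun y => u + M.mulVec y) '' A) ∪ ((fun y => -u + M.mulVec y) '' A) := by
    rintro x hx
    rw [hAeq] at hx
    obtain ⟨a, haS, rfl⟩ := hx
    set b : ℕ → ℝ := fun k => a (k + 1) with hb
    have hbS : b ∈ S := by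
      rw [hmemS]; intro k; exact (hmemS a).1 haS (k + 1)
    have key : π a = a 0 • u + M.mulVec (π b) := by
      have h0 := Summable.tsum_eq_zero_add (hsummand a haS)
      have hMv : ∀ k : ℕ, a (k + 1) • v (k + 1) = a (k+1) • M.mulVec (v k) := by
        intro k
        congr 1
        rw [hv]
        simp only [pow_succ']
        rw [← Matrix.mulVec_mulVec]
      have hs2 : Summable (fun k : ℕ => b k • v k) := hsummand b hbS
      calc π a = a 0 • v 0 + ∑' k : ℕ, a (k+1) • v (k+1) := h0
        _ = a 0 • u + ∑' k : ℕ, a (k+1) • M.mulVec (v k) := by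
            rw [tsum_congr hMv]
            congr 2
            simp [hv]
        _ = a 0 • u + ∑' k : ℕ, L (b k • v k) := by
            congr 1
            refine tsum_congr fun k => ?_
            rw [ContinuousLinearMap.map_smul]
            rfl
        _ = a 0 • u + M.mulVec (π b) := by
            rw [← L.map_tsum hs2]
            rfl
    rcases (hmemS a).1 haS 0 with h | h
    · right
      refine ⟨π b, hAeq ▸ Set.mem_image_of_mem _ hbS, ?_⟩
      rw [key, h]; simp
    · left
      refine ⟨π b, hAeq ▸ Set.mem_image_of_mem _ hbS, ?_⟩
      rw [key, h]; simp
  -- measure computation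
  have hdetL : LinearMap.det (M.mulVecLin) = M.det := by
    rw [← Matrix.toLin'_apply', LinearMap.det_toLin']
  have himg : ∀ c : Fin d → ℝ, volume ((fun y => c + M.mulVec y) '' A)
      = ENNReal.ofReal |M.det| * volume A := by
    intro c
    have : (fun y => c + M.mulVec y) = (fun z => c + z) ∘ (fun y => M.mulVec y) := rfl
    rw [this, Set.image_comp]
    have h1 : volume ((fun z => c + z) '' ((fun y => M.mulVec y) '' A))
        = volume ((fun y => M.mulVec y) '' A) := by
      have := measure_vadd (μ := volume) c ((fun y => M.mulVec y) '' A)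
      simpa [← Set.image_vadd, vadd_eq_add] using this
    rw [h1]
    have h2 : (fun y => M.mulVec y) '' A = (M.mulVecLin : (Fin d → ℝ) →ₗ[ℝ] (Fin d → ℝ)) '' A := rfl
    rw [h2, Measure.addHaar_image_linearMap, hdetL]
  have hfin : volume A ≠ ⊤ := hAcomp.measure_lt_top.ne
  have hAzero : volume A = 0 := by
    by_contra h0
    have hle : volume A ≤ 2 * (ENNReal.ofReal |M.det| * volume A) := by
      calc volume A ≤ volume ((fun y => u + M.mulVec y) '' A)
            + volume ((fun y => -u + M.mulVec y) '' A) :=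
            (measure_mono hsub).trans (measure_union_le _ _)
        _ = 2 * (ENNReal.ofReal |M.det| * volume A) := by
            rw [himg u, himg (-u)]; ring
    have hlt : 2 * (ENNReal.ofReal |M.det| * volume A) < volume A := by
      have h2d : (2 : ℝ≥0∞) * ENNReal.ofReal |M.det| < 1 := by
        have : ENNReal.ofReal |M.det| < ENNReal.ofReal (1/2) :=
          (ENNReal.ofReal_lt_ofReal_iff (by norm_num)).2 hdet
        calc (2 : ℝ≥0∞) * ENNReal.ofReal |M.det| < 2 * ENNReal.ofReal (1/2) := by
              exact ENNReal.mul_lt_mul_iff_right (by norm_num) (by norm_num) |>.2 this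
          _ = 1 := by
              rw [← ENNReal.ofReal_ofNat, ← ENNReal.ofReal_mul (by norm_num)]
              norm_num
      calc 2 * (ENNReal.ofReal |M.det| * volume A)
          = (2 * ENNReal.ofReal |M.det|) * volume A := by ring
        _ < 1 * volume A := (ENNReal.mul_lt_mul_iff_left h0 hfin).2 h2d
        _ = volume A := one_mul _
    exact absurd (hle.trans_lt hlt) (lt_irrefl _)
  refine ⟨hAzero, ?_⟩
  by_contra hne
  obtain ⟨x, hx⟩ := Set.nonempty_iff_ne_empty.2 hne
  have hpos : 0 < volume (interior A) := isOpen_interior.measure_pos volume ⟨x, hx⟩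
  have hle2 : volume (interior A) ≤ volume A := measure_mono interior_subset
  rw [hAzero] at hle2
  exact absurd (hpos.trans_le hle2) (lt_irrefl 0)
end

section
/- Let M_1 be a d_1×d_1 real matrix and M_2 a d_2×d_2 real matrix, both with all complex eigenvalues of modulus strictly less than 1, and let u_1 ∈ ℝ^{d_1}, u_2 ∈ ℝ^{d_2}. Let M be the block-diagonal matrix with blocks M_1 and M_2, and u = (u_1, u_2) ∈ ℝ^{d_1+d_2}. If the set of uniqueness 𝒰_{M_1} (with respect to (M_1,u_1)) has positive Hausdorff dimension, or 𝒰_{M_2} (with respect to (M_2,u_2)) has positive Hausdorff dimension, then the set of uniqueness 𝒰_M (with respect to (M,u)) has positive Hausdorff dimension. -/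
open Matrix
open scoped NNReal ENNReal

/-- The set of uniqueness `𝒰_M`: points of the attractor having a unique `±1` address. -/
noncomputable def uniqSet {ι : Type*} [Fintype ι] [DecidableEq ι]
    (M : Matrix ι ι ℝ) (u : ι → ℝ) : Set (ι → ℝ) :=
  {x | ∃ a : ℕ → ℝ, (∀ k, a k = -1 ∨ a k = 1) ∧
    x = ∑' k : ℕ, a k • (M ^ k).mulVec u ∧
    ∀ b : ℕ → ℝ, (∀ k, b k = -1 ∨ b k = 1) →
      (∑' k : ℕ, b k • (M ^ k).mulVec u) = x → b = a}

section Aux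

attribute [local instance] Matrix.linftyOpNormedRing Matrix.linftyOpNormedAlgebra
  Matrix.linftyOpNormedAddCommGroup Matrix.linftyOpNormedSpace

lemma linfty_nnnorm_map_complex {d : ℕ} (A : Matrix (Fin d) (Fin d) ℝ) :
    ‖A.map (algebraMap ℝ ℂ)‖₊ = ‖A‖₊ := by
  rw [Matrix.linfty_opNNNorm_def, Matrix.linfty_opNNNorm_def]
  congr 1
  funext i
  congr 1
  funext j
  ext
  simp [Matrix.map_apply, Complex.norm_real]

/-- Geometric summability from the eigenvalue condition. -/
lemma summable_addr {d : ℕ} (M : Matrix (Fin d) (Fin d) ℝ)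
    (h : ∀ κ ∈ spectrum ℂ (M.map (algebraMap ℝ ℂ)), ‖κ‖ < 1)
    (u : Fin d → ℝ) (a : ℕ → ℝ) (ha : ∀ k, |a k| ≤ 1) :
    Summable (fun k : ℕ => a k • (M ^ k).mulVec u) := by
  rcases Nat.eq_zero_or_pos d with hd | hd
  · subst hd
    have hz : (fun k : ℕ => a k • (M ^ k).mulVec u) = fun _ => 0 :=
      funext fun k => Subsingleton.elim _ _
    rw [hz]
    exact summable_zero
  · haveI : Nonempty (Fin d) := Fin.pos_iff_nonempty.mp hd
    haveI : CompleteSpace (Matrix (Fin d) (Fin d) ℂ) := FiniteDimensional.complete ℂ _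
    set B := M.map (algebraMap ℝ ℂ) with hB
    have hspec : spectralRadius ℂ B < 1 := by
      have h1 : spectralRadius ℂ B < ((1 : ℝ≥0) : ℝ≥0∞) :=
        spectrum.spectralRadius_lt_of_forall_lt B fun z hz => by
          have := h z hz
          rw [← NNReal.coe_lt_coe, coe_nnnorm]
          simpa using this
      simpa using h1
    obtain ⟨r, hr1, hr2⟩ := ENNReal.lt_iff_exists_nnreal_btwn.mp hspec
    have hr2' : (r : ℝ) < 1 := by exact_mod_cast hr2
    have hten := spectrum.pow_nnnorm_pow_one_div_tendsto_nhds_spectralRadius B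
    have hev : ∀ᶠ n : ℕ in Filter.atTop,
        ((‖B ^ n‖₊ : ℝ≥0∞)) ^ (1 / (n : ℝ)) < (r : ℝ≥0∞) :=
      hten.eventually_lt_const hr1
    have hbound : ∀ᶠ n : ℕ in Filter.atTop, ‖B ^ n‖₊ ≤ r ^ n := by
      filter_upwards [hev, Filter.eventually_ge_atTop 1] with n hn hn1
      have hne : (n : ℝ) ≠ 0 := by positivity
      have h1 : ((‖B ^ n‖₊ : ℝ≥0∞) ^ (1 / (n : ℝ))) ^ (n : ℝ)
          ≤ ((r : ℝ≥0∞)) ^ (n : ℝ) :=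
        ENNReal.rpow_le_rpow hn.le (by positivity)
      rw [← ENNReal.rpow_mul, one_div, inv_mul_cancel₀ hne, ENNReal.rpow_one] at h1
      have h2 : ((‖B ^ n‖₊ : ℝ≥0∞)) ≤ ((r ^ n : ℝ≥0) : ℝ≥0∞) := by
        rwa [ENNReal.rpow_natCast, ← ENNReal.coe_pow] at h1
      exact_mod_cast h2
    have hnorm_eq : ∀ n : ℕ, ‖M ^ n‖₊ = ‖B ^ n‖₊ := by
      intro n
      have : B ^ n = (M ^ n).map (algebraMap ℝ ℂ) := by
        rw [hB, ← RingHom.mapMatrix_apply, ← RingHom.mapMatrix_apply, ← map_pow]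
      rw [this, linfty_nnnorm_map_complex]
    refine Summable.of_norm_bounded_eventually_nat
      (Summable.mul_right ‖u‖ (summable_geometric_of_lt_one r.2 hr2')) ?_
    filter_upwards [hbound] with n hn
    have h3 : ‖(M ^ n).mulVec u‖ ≤ ‖M ^ n‖ * ‖u‖ := Matrix.linfty_opNorm_mulVec _ _
    have h4 : ‖M ^ n‖ ≤ (r : ℝ) ^ n := by
      have := hnorm_eq n ▸ hn
      calc ‖M ^ n‖ = (‖M ^ n‖₊ : ℝ) := rfl
        _ ≤ ((r ^ n : ℝ≥0) : ℝ) := by exact_mod_cast this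
        _ = (r : ℝ) ^ n := by push_cast; ring
    calc ‖a n • (M ^ n).mulVec u‖ = |a n| * ‖(M ^ n).mulVec u‖ := by
          rw [norm_smul, Real.norm_eq_abs]
      _ ≤ 1 * (‖M ^ n‖ * ‖u‖) := by
          apply mul_le_mul (ha n) h3 (norm_nonneg _) zero_le_one
      _ = ‖M ^ n‖ * ‖u‖ := one_mul _
      _ ≤ (r : ℝ) ^ n * ‖u‖ := by
          apply mul_le_mul_of_nonneg_right h4 (norm_nonneg _)

end Aux

/-- Projection lemma: if the unique-address dynamics of `(M', u')` appears as a coordinate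
projection of that of `(M, u)`, positivity of dimension transfers. -/
lemma dimH_pos_of_proj {ι κ : Type*} [Fintype ι] [DecidableEq ι] [Fintype κ] [DecidableEq κ]
    (M : Matrix ι ι ℝ) (u : ι → ℝ) (M' : Matrix κ κ ℝ) (u' : κ → ℝ) (f : κ → ι)
    (hcomp : ∀ (k : ℕ) (j : κ), ((M ^ k).mulVec u) (f j) = ((M' ^ k).mulVec u') j)
    (hsum : ∀ a : ℕ → ℝ, (∀ k, a k = -1 ∨ a k = 1) →
      Summable (fun k : ℕ => a k • (M ^ k).mulVec u))
    (hpos : 0 < dimH (uniqSet M' u')) : 0 < dimH (uniqSet M u) := by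
  set p : (ι → ℝ) → (κ → ℝ) := fun x j => x (f j) with hp
  have hlip : LipschitzWith 1 p := LipschitzWith.of_dist_le_mul fun x y => by
    simp only [NNReal.coe_one, one_mul]
    exact (dist_pi_le_iff dist_nonneg).2 fun j => dist_le_pi_dist x y (f j)
  have key : ∀ c : ℕ → ℝ, Summable (fun k : ℕ => c k • (M ^ k).mulVec u) →
      ∀ j, (∑' k : ℕ, c k • (M ^ k).mulVec u) (f j)
        = (∑' k : ℕ, c k • (M' ^ k).mulVec u') j := by
    intro c hc j
    have hc' : Summable (fun k : ℕ => c k • (M' ^ k).mulVec u') := by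
      apply Pi.summable.2
      intro j'
      have := Pi.summable.1 hc (f j')
      simpa [Pi.smul_apply, hcomp] using this
    rw [tsum_apply hc, tsum_apply hc']
    congr 1
    funext k
    simp [Pi.smul_apply, hcomp]
  have hsub : uniqSet M' u' ⊆ p '' uniqSet M u := by
    rintro x ⟨a, ha, hx, huniq⟩
    have hsa := hsum a ha
    refine ⟨∑' k : ℕ, a k • (M ^ k).mulVec u, ⟨a, ha, rfl, ?_⟩, ?_⟩
    · intro b hb hbeq
      have hsb := hsum b hb
      apply huniq b hb
      funext j
      have h1 := key b hsb j
      have h2 := key a hsa j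
      rw [← h1, hbeq, h2, ← hx]
    · funext j
      rw [hp]
      simp only
      rw [key a hsa j, ← hx]
  calc (0 : ℝ≥0∞) < dimH (uniqSet M' u') := hpos
    _ ≤ dimH (p '' uniqSet M u) := dimH_mono hsub
    _ ≤ dimH (uniqSet M u) := hlip.dimH_image_le _

/-- For the block-diagonal matrix `M = diag(M₁, M₂)` and `u = (u₁, u₂)`,
if `𝒰_{M₁}` or `𝒰_{M₂}` has positive Hausdorff dimension, then so does `𝒰_M`. -/
theorem stmt_10 (d₁ d₂ : ℕ)
    (M₁ : Matrix (Fin d₁) (Fin d₁) ℝ) (M₂ : Matrix (Fin d₂) (Fin d₂) ℝ)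
    (h1 : ∀ κ ∈ spectrum ℂ (M₁.map (algebraMap ℝ ℂ)), ‖κ‖ < 1)
    (h2 : ∀ κ ∈ spectrum ℂ (M₂.map (algebraMap ℝ ℂ)), ‖κ‖ < 1)
    (u₁ : Fin d₁ → ℝ) (u₂ : Fin d₂ → ℝ)
    (hpos : 0 < dimH (uniqSet M₁ u₁) ∨ 0 < dimH (uniqSet M₂ u₂)) :
    0 < dimH (uniqSet (Matrix.fromBlocks M₁ 0 0 M₂) (Sum.elim u₁ u₂)) := by
  set M : Matrix (Fin d₁ ⊕ Fin d₂) (Fin d₁ ⊕ Fin d₂) ℝ := Matrix.fromBlocks M₁ 0 0 M₂ with hM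
  have hpow : ∀ k : ℕ, M ^ k = Matrix.fromBlocks (M₁ ^ k) 0 0 (M₂ ^ k) := by
    intro k
    induction k with
    | zero => simp [hM, pow_zero, Matrix.fromBlocks_one]
    | succ n ih =>
      rw [pow_succ, pow_succ, pow_succ, ih, hM, Matrix.fromBlocks_multiply]
      simp
  have hmv : ∀ k : ℕ, (M ^ k).mulVec (Sum.elim u₁ u₂)
      = Sum.elim ((M₁ ^ k).mulVec u₁) ((M₂ ^ k).mulVec u₂) := by
    intro k
    rw [hpow, Matrix.fromBlocks_mulVec]
    simp [Matrix.zero_mulVec]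
  have habs : ∀ a : ℕ → ℝ, (∀ k, a k = -1 ∨ a k = 1) → ∀ k, |a k| ≤ 1 := by
    intro a ha k
    rcases ha k with h | h <;> rw [h] <;> norm_num
  have hsum : ∀ a : ℕ → ℝ, (∀ k, a k = -1 ∨ a k = 1) →
      Summable (fun k : ℕ => a k • (M ^ k).mulVec (Sum.elim u₁ u₂)) := by
    intro a ha
    apply Pi.summable.2
    rintro (i | i)
    · have := Pi.summable.1 (summable_addr M₁ h1 u₁ a (habs a ha)) i
      simpa [hmv, Pi.smul_apply] using this
    · have := Pi.summable.1 (summable_addr M₂ h2 u₂ a (habs a ha)) i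
      simpa [hmv, Pi.smul_apply] using this
  rcases hpos with hpos | hpos
  · exact dimH_pos_of_proj M (Sum.elim u₁ u₂) M₁ u₁ Sum.inl
      (fun k j => by rw [hmv]; rfl) hsum hpos
  · exact dimH_pos_of_proj M (Sum.elim u₁ u₂) M₂ u₂ Sum.inr
      (fun k j => by rw [hmv]; rfl) hsum hpos
end
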